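/- arXiv:2202.04116 — 2 statements merged into one kernel-verified Lean document; each statement's English description precedes it below -/
import Mathlib

section
/- Let n ≥ 1 and let a_0, a_1, …, a_{n−1} be real numbers. The n×n L-matrix A_n with entries (A_n)_{i,j} = a_{max(i,j)} is positive definite if and only if a_0 > a_1 > … > a_{n−1} > 0. -/
open Matrix Finset

private lemma telescope_Ico (b : ℕ → ℝ) (m n : ℕ) (h : m ≤ n) :
    ∑ k ∈ Finset.Ico m n, (b k - b (k + 1)) = b m - b n := by
  induction n with
  | zero => interval_cases m; simp
  | succ n ih =>
    rcases eq_or_lt_of_le h with rfl | h'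
    · simp
    · have hmn : m ≤ n := Nat.lt_succ_iff.mp h'
      rw [Finset.sum_Ico_succ_top hmn, ih hmn]
      ring

private lemma posDef_conj {m : Type*} [Fintype m] [DecidableEq m]
    {M L : Matrix m m ℝ} (hM : M.PosDef) (hL : IsUnit L.det) :
    (Lᵀ * M * L).PosDef := by
  rw [Matrix.posDef_iff_dotProduct_mulVec]
  constructor
  · have h1 := hM.1
    rw [Matrix.IsHermitian, Matrix.conjTranspose_eq_transpose_of_trivial] at h1 ⊢
    rw [Matrix.transpose_mul, Matrix.transpose_mul, Matrix.transpose_transpose, h1,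
      Matrix.mul_assoc]
  · intro x hx
    have hinj : Function.Injective L.mulVec :=
      Matrix.mulVec_injective_iff_isUnit.mpr ((Matrix.isUnit_iff_isUnit_det L).mpr hL)
    have hLx : L.mulVec x ≠ 0 := by
      intro h
      exact hx (hinj (by simpa using h))
    have h0 := hM.dotProduct_mulVec_pos hLx
    rw [Matrix.mul_assoc, ← Matrix.mulVec_mulVec, Matrix.dotProduct_mulVec]
    simp only [star_trivial] at h0 ⊢
    rw [Matrix.vecMul_transpose]
    simpa only [Matrix.mulVec_mulVec] using h0

private def bfun (n : ℕ) (a : ℕ → ℝ) : ℕ → ℝ := fun k => if k < n then a k else 0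

private def dfun (n : ℕ) (a : ℕ → ℝ) : Fin n → ℝ :=
  fun k => bfun n a k - bfun n a (k + 1)

private def Lmat (n : ℕ) : Matrix (Fin n) (Fin n) ℝ :=
  Matrix.of fun k i : Fin n => if i ≤ k then (1 : ℝ) else 0

private lemma Lmat_det_isUnit (n : ℕ) : IsUnit (Lmat n).det := by
  have : (Lmat n).det = 1 := by
    rw [Matrix.det_of_lowerTriangular (Lmat n)]
    · simp [Lmat]
    · intro p q hpq
      simp only [Lmat, Matrix.of_apply, ite_eq_right_iff]
      intro hqp
      exact absurd hqp (not_le.mpr hpq)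
  simp [this]

private lemma L_factor (n : ℕ) (hn : 1 ≤ n) (a : ℕ → ℝ) :
    (Matrix.of fun i j : Fin n => a (max (i : ℕ) (j : ℕ)))
      = (Lmat n)ᵀ * Matrix.diagonal (dfun n a) * Lmat n := by
  set b := bfun n a with hb
  ext i j
  have hmax : (max (i : ℕ) (j : ℕ)) < n := by
    rcases max_cases (i : ℕ) (j : ℕ) with ⟨h, _⟩ | ⟨h, _⟩ <;> rw [h] <;> simp [i.2, j.2]
  have step1 : ((Lmat n)ᵀ * Matrix.diagonal (dfun n a) * Lmat n) i j
      = ∑ k : Fin n,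
        (if i ≤ k then (1:ℝ) else 0) * (dfun n a k * (if j ≤ k then (1:ℝ) else 0)) := by
    rw [Matrix.mul_assoc, Matrix.mul_apply]
    refine Finset.sum_congr rfl fun k _ => ?_
    rw [Matrix.diagonal_mul]
    simp [Lmat]
  have step2 : ∀ k : Fin n,
      (if i ≤ k then (1:ℝ) else 0) * (dfun n a k * (if j ≤ k then (1:ℝ) else 0))
        = (fun m : ℕ => if (max (i:ℕ) (j:ℕ)) ≤ m then b m - b (m + 1) else 0) (k : ℕ) := by
    intro k
    rcases le_or_gt i k with h1 | h1
    · rcases le_or_gt j k with h2 | h2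
      · have hm : (max (i:ℕ) (j:ℕ)) ≤ (k : ℕ) := max_le (Fin.le_def.mp h1) (Fin.le_def.mp h2)
        rw [if_pos h1, if_pos h2, one_mul, mul_one]
        simp only [if_pos hm]
        rfl
      · have hm : ¬ (max (i:ℕ) (j:ℕ)) ≤ (k : ℕ) := by
          simp only [max_le_iff, not_and_or]
          exact Or.inr (not_le.mpr (Fin.lt_def.mp h2))
        rw [if_neg (not_le.mpr h2)]
        simp only [if_neg hm, mul_zero, zero_mul]
    · have hm : ¬ (max (i:ℕ) (j:ℕ)) ≤ (k : ℕ) := by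
        simp only [max_le_iff, not_and_or]
        exact Or.inl (not_le.mpr (Fin.lt_def.mp h1))
      rw [if_neg (not_le.mpr h1)]
      simp only [if_neg hm, zero_mul]
  rw [step1, Finset.sum_congr rfl (fun k _ => step2 k),
    Fin.sum_univ_eq_sum_range
      (fun m : ℕ => if (max (i:ℕ) (j:ℕ)) ≤ m then b m - b (m+1) else 0) n,
    ← Finset.sum_filter]
  have hfil : (Finset.range n).filter (fun m => (max (i:ℕ) (j:ℕ)) ≤ m)
      = Finset.Ico (max (i:ℕ) (j:ℕ)) n := by
    ext m
    simp [Finset.mem_filter, Finset.mem_Ico, Finset.mem_range, and_comm]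
  rw [hfil, telescope_Ico b _ n hmax.le]
  have e1 : b n = 0 := if_neg (by omega)
  have e2 : b (max (i:ℕ) (j:ℕ)) = a (max (i:ℕ) (j:ℕ)) := if_pos hmax
  rw [e1, e2, sub_zero]
  simp

/-- For `n ≥ 1` and real numbers `a_0, …, a_{n−1}`, the L-matrix with entries
`(A_n)_{i,j} = a_{max(i,j)}` is positive definite iff `a_0 > a_1 > … > a_{n−1} > 0`. -/
theorem L_matrix_posDef_iff (n : ℕ) (hn : 1 ≤ n) (a : ℕ → ℝ) :
    (Matrix.of fun i j : Fin n => a (max (i : ℕ) (j : ℕ))).PosDef ↔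
      ((∀ j : ℕ, j < n - 1 → a (j + 1) < a j) ∧ 0 < a (n - 1)) := by
  have hb1 : ∀ m, m < n → bfun n a m = a m := fun m hm => if_pos hm
  have hb2 : ∀ m, ¬ m < n → bfun n a m = 0 := fun m hm => if_neg hm
  have hfact := L_factor n hn a
  have hLdet := Lmat_det_isUnit n
  have hLinvdet : IsUnit ((Lmat n)⁻¹).det := (Lmat n).isUnit_nonsing_inv_det hLdet
  constructor
  · intro hPD
    have hD : (Matrix.diagonal (dfun n a)).PosDef := by
      have h2 : (((Lmat n)⁻¹)ᵀ * (Matrix.of fun i j : Fin n => a (max (i : ℕ) (j : ℕ)))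
          * (Lmat n)⁻¹) = Matrix.diagonal (dfun n a) := by
        rw [hfact, Matrix.transpose_nonsing_inv]
        rw [Matrix.mul_assoc, Matrix.mul_assoc, Matrix.mul_nonsing_inv _ hLdet, Matrix.mul_one,
          ← Matrix.mul_assoc, Matrix.nonsing_inv_mul _ (by rwa [Matrix.det_transpose]),
          Matrix.one_mul]
      rw [← h2]
      exact posDef_conj hPD hLinvdet
    rw [Matrix.posDef_diagonal_iff] at hD
    constructor
    · intro j hj
      have hjn : j < n := lt_of_lt_of_le hj (Nat.sub_le n 1)
      have hdj : (0:ℝ) < bfun n a j - bfun n a (j + 1) := hD ⟨j, hjn⟩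
      rw [hb1 j hjn, hb1 (j+1) (by omega)] at hdj
      linarith
    · have hn1 : n - 1 < n := by omega
      have hdl : (0:ℝ) < bfun n a (n - 1) - bfun n a (n - 1 + 1) := hD ⟨n - 1, hn1⟩
      rw [hb1 _ hn1, hb2 (n - 1 + 1) (by omega)] at hdl
      linarith
  · rintro ⟨h1, h2⟩
    rw [hfact]
    apply posDef_conj _ hLdet
    apply Matrix.PosDef.diagonal
    intro k
    show (0:ℝ) < bfun n a (k : ℕ) - bfun n a ((k : ℕ) + 1)
    by_cases hk : (k : ℕ) < n - 1
    · have := h1 (k : ℕ) hk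
      rw [hb1 _ k.2, hb1 _ (by omega)]
      linarith
    · have hk' : (k : ℕ) = n - 1 := by have := k.2; omega
      rw [hk', hb1 _ (by omega), hb2 (n - 1 + 1) (by omega)]
      linarith
end

section
/- Let b_0, b_1, b_2, … be real numbers and define polynomials Q_m by Q_0(x) = 1, Q_1(x) = x, and Q_{m+1}(x) = x Q_m(x) − b_{⌊(m−1)/2⌋} Q_{m−1}(x) for m ≥ 1. Let B_n be the n×n symmetric tridiagonal Jacobi matrix with diagonal entries (B_n)_{0,0} = b_0, (B_n)_{j,j} = b_{j−1}+b_j for 1 ≤ j ≤ n−1, and off-diagonal entries (B_n)_{j,j+1} = (B_n)_{j+1,j} = −b_j for 0 ≤ j ≤ n−2. Then for every n ∈ ℕ and every x, Q_{2n}(x) = det( x² I_n − B_n ). -/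
/-- The `m×m` symmetric tridiagonal Jacobi matrix with diagonal
`(b_0, b_0+b_1, …, b_{m−2}+b_{m−1})` and sub/superdiagonal entries `−b_0, …, −b_{m−2}`. -/
noncomputable def jacobiMat (b : ℕ → ℝ) (m : ℕ) : Matrix (Fin m) (Fin m) ℝ :=
  Matrix.of fun i j =>
    if (i : ℕ) = (j : ℕ) then
      (if (i : ℕ) = 0 then b 0 else b ((i : ℕ) - 1) + b (i : ℕ))
    else if (i : ℕ) + 1 = (j : ℕ) ∨ (j : ℕ) + 1 = (i : ℕ) then
      -(b (min (i : ℕ) (j : ℕ)))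
    else 0


/-- The polynomials `Q_0(x)=1`, `Q_1(x)=x`,
`Q_{m+1}(x) = x Q_m(x) − b_{⌊(m−1)/2⌋} Q_{m−1}(x)` for `m ≥ 1`. -/
noncomputable def Qpoly (b : ℕ → ℝ) : ℕ → ℝ → ℝ
  | 0 => fun _ => 1
  | 1 => fun x => x
  | (m + 2) => fun x => x * Qpoly b (m + 1) x - b (m / 2) * Qpoly b m x

noncomputable def aent (b : ℕ → ℝ) (x : ℝ) (i j : ℕ) : ℝ :=
  if i = j then (x ^ 2 - (if i = 0 then b 0 else b (i - 1) + b i))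
  else if i + 1 = j ∨ j + 1 = i then b (min i j) else 0

noncomputable def Mm (b : ℕ → ℝ) (x : ℝ) (m : ℕ) : Matrix (Fin m) (Fin m) ℝ :=
  Matrix.of fun i j => aent b x i j

lemma MA (b : ℕ → ℝ) (x : ℝ) (m : ℕ) :
    x ^ 2 • (1 : Matrix (Fin m) (Fin m) ℝ) - jacobiMat b m = Mm b x m := by
  ext i j
  simp only [Mm, jacobiMat, aent, Matrix.sub_apply, Matrix.smul_apply, Matrix.one_apply,
    Matrix.of_apply, smul_eq_mul]
  rcases eq_or_ne (i : ℕ) (j : ℕ) with h | h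
  · have : i = j := Fin.ext h
    simp [this, h]
  · have : i ≠ j := fun hh => h (by rw [hh])
    simp [h, this]
    split <;> ring

lemma succAbove_val {m : ℕ} (p : Fin (m + 1)) (j : Fin m) :
    ((p.succAbove j : Fin (m + 1)) : ℕ) = if (j : ℕ) < (p : ℕ) then (j : ℕ) else (j : ℕ) + 1 := by
  rw [Fin.succAbove]
  split
  · next h =>
    rw [Fin.lt_def] at h
    simp only [Fin.coe_castSucc] at h
    simp [h]
  · next h =>
    rw [Fin.lt_def] at h
    simp only [Fin.coe_castSucc] at h
    rw [if_neg h]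
    simp

lemma Drec (b : ℕ → ℝ) (x : ℝ) (n : ℕ) :
    (Mm b x (n + 2)).det =
      (x ^ 2 - (b n + b (n + 1))) * (Mm b x (n + 1)).det - (b n) ^ 2 * (Mm b x n).det := by
  have hn : n < n + 2 := by omega
  set p : Fin (n + 2) := ⟨n, hn⟩ with hp
  rw [Matrix.det_succ_row (Mm b x (n + 2)) (Fin.last (n + 1))]
  rw [Finset.sum_eq_add_of_mem p (Fin.last (n + 1)) (Finset.mem_univ _) (Finset.mem_univ _)
      (by simp [hp, Fin.ext_iff]) ?_]
  · -- evaluate the two terms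
    have hApn : Mm b x (n + 2) (Fin.last (n + 1)) p = b n := by
      simp [Mm, aent, hp, Fin.last]
    have hAll : Mm b x (n + 2) (Fin.last (n + 1)) (Fin.last (n + 1)) =
        x ^ 2 - (b n + b (n + 1)) := by
      simp [Mm, aent, Fin.last]
    have hminor1 : (Mm b x (n + 2)).submatrix (Fin.last (n + 1)).succAbove
        (Fin.last (n + 1)).succAbove = Mm b x (n + 1) := by
      ext i j
      simp [Mm, Matrix.submatrix, Fin.succAbove_last]
    have hcol : ((p.succAbove (Fin.last n) : Fin (n + 2)) : ℕ) = n + 1 := by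
      rw [succAbove_val]; simp [hp, Fin.last]
    have hminor2 : ((Mm b x (n + 2)).submatrix (Fin.last (n + 1)).succAbove
        p.succAbove).det = b n * (Mm b x n).det := by
      set N := (Mm b x (n + 2)).submatrix (Fin.last (n + 1)).succAbove p.succAbove with hN
      rw [Matrix.det_succ_column N (Fin.last n)]
      rw [Finset.sum_eq_single (Fin.last n) ?_ (by simp)]
      · have hNll : N (Fin.last n) (Fin.last n) = b n := by
          simp only [hN, Matrix.submatrix_apply, Fin.succAbove_last, Mm, Matrix.of_apply,
            aent, Fin.coe_castSucc, Fin.val_last, hcol]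
          have hmin : min n (n + 1) = n := min_eq_left (Nat.le_succ n)
          simp [hmin]
        have hmm : N.submatrix (Fin.last n).succAbove (Fin.last n).succAbove = Mm b x n := by
          ext i j
          have hc : ((p.succAbove (Fin.castSucc j) : Fin (n + 2)) : ℕ) = (j : ℕ) := by
            rw [succAbove_val]
            simp only [Fin.coe_castSucc, hp]
            rw [if_pos j.isLt]
          simp only [hN, Matrix.submatrix_apply, Fin.succAbove_last, Mm, Matrix.of_apply,
            Fin.coe_castSucc, hc]
        rw [hNll, hmm]
        have : ((-1 : ℝ)) ^ ((Fin.last n : ℕ) + (Fin.last n : ℕ)) = 1 := by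
          exact Even.neg_one_pow ⟨_, rfl⟩
        rw [this]
        ring
      · intro i _ hi
        have hival : (i : ℕ) < n := by
          have h2 := i.isLt
          have : (i : ℕ) ≠ n := fun h => hi (Fin.ext (by simp [Fin.val_last, h]))
          omega
        have h1 : (((Fin.last (n + 1)).succAbove i : Fin (n + 2)) : ℕ) = (i : ℕ) := by
          simp [Fin.succAbove_last]
        have : N i (Fin.last n) = 0 := by
          simp only [hN, Matrix.submatrix_apply, Mm, Matrix.of_apply, aent, h1, hcol]
          rw [if_neg (by omega), if_neg (by omega)]
        rw [this]
        ring
    rw [hApn, hAll, hminor1, hminor2]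
    have h1 : ((-1 : ℝ)) ^ ((Fin.last (n + 1) : ℕ) + (p : ℕ)) = -1 := by
      simp only [Fin.val_last, hp]
      exact Odd.neg_one_pow ⟨n, by ring⟩
    have h2 : ((-1 : ℝ)) ^ ((Fin.last (n + 1) : ℕ) + (Fin.last (n + 1) : ℕ)) = 1 := by
      simp only [Fin.val_last]
      exact Even.neg_one_pow ⟨n + 1, by ring⟩
    rw [h1, h2]
    ring
  · intro c _ hc
    have h1 : (c : ℕ) ≠ n := fun h => hc.1 (Fin.ext (by simp [hp, h]))
    have h2 : (c : ℕ) ≠ n + 1 := fun h => hc.2 (Fin.ext (by simp [Fin.val_last, h]))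
    have : Mm b x (n + 2) (Fin.last (n + 1)) c = 0 := by
      simp only [Mm, Matrix.of_apply, aent, Fin.val_last]
      have hlt := c.isLt
      rw [if_neg (by omega), if_neg (by omega)]
    rw [this]
    ring

theorem Qpoly_even_eq_det' (b : ℕ → ℝ) (n : ℕ) (x : ℝ) :
    Qpoly b (2 * n) x = (Mm b x n).det := by
  induction n using Nat.strong_induction_on with
  | _ n ih =>
    match n with
    | 0 => simp [Qpoly, Mm, Matrix.det_fin_zero]
    | 1 =>
      show Qpoly b 2 x = _
      simp [Qpoly, Mm, Matrix.det_fin_one, aent]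
      ring
    | (n + 2) =>
      have e1 : Qpoly b (2 * (n + 2)) x
          = x * Qpoly b (2 * n + 3) x - b (n + 1) * Qpoly b (2 * n + 2) x := by
        rw [show 2 * (n + 2) = 2 * n + 2 + 2 from by ring, Qpoly]
        simp only [show 2 * n + 2 + 1 = 2 * n + 3 from by ring,
          show (2 * n + 2) / 2 = n + 1 from by omega]
      have e2 : Qpoly b (2 * n + 3) x
          = x * Qpoly b (2 * n + 2) x - b n * Qpoly b (2 * n + 1) x := by
        rw [show 2 * n + 3 = 2 * n + 1 + 2 from by ring, Qpoly]
        simp only [show 2 * n + 1 + 1 = 2 * n + 2 from by ring,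
          show (2 * n + 1) / 2 = n from by omega]
      have e3 : Qpoly b (2 * n + 2) x
          = x * Qpoly b (2 * n + 1) x - b n * Qpoly b (2 * n) x := by
        rw [show 2 * n + 2 = 2 * n + 2 from rfl, Qpoly]
        simp only [show 2 * n + 1 = 2 * n + 1 from rfl,
          show (2 * n) / 2 = n from by omega]
      have key : Qpoly b (2 * (n + 2)) x
          = (x ^ 2 - (b n + b (n + 1))) * Qpoly b (2 * n + 2) x
            - (b n) ^ 2 * Qpoly b (2 * n) x := by
        have hx : x * Qpoly b (2 * n + 1) x
            = Qpoly b (2 * n + 2) x + b n * Qpoly b (2 * n) x := by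
          rw [e3]; ring
        calc Qpoly b (2 * (n + 2)) x
            = x ^ 2 * Qpoly b (2 * n + 2) x - b n * (x * Qpoly b (2 * n + 1) x)
              - b (n + 1) * Qpoly b (2 * n + 2) x := by rw [e1, e2]; ring
          _ = _ := by rw [hx]; ring
      rw [key, Drec b x n]
      have hA : Qpoly b (2 * n + 2) x = (Mm b x (n + 1)).det := by
        rw [show 2 * n + 2 = 2 * (n + 1) from by ring]
        exact ih (n + 1) (by omega)
      rw [hA, ih n (by omega)]

/-- For every `n` and every `x`, `Q_{2n}(x) = det(x² I_n − B_n)`, where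
`B_n` is the Jacobi matrix built from the sequence `b`. -/
theorem Qpoly_even_eq_det (b : ℕ → ℝ) (n : ℕ) (x : ℝ) :
    Qpoly b (2 * n) x =
      (x ^ 2 • (1 : Matrix (Fin n) (Fin n) ℝ) - jacobiMat b n).det := by
  rw [MA, Qpoly_even_eq_det']
end
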